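/- Let H ≥ 1 and K ≥ 1 be integers, G a finite type, g : {1,…,K} → G, and φ : {1,…,K} → ℝ with φ(k) ≥ 0 for all k. For each k let n_k = |{k' < k : g(k') = g(k)}|, and for s ∈ G and i ≥ 1 with at least i indices mapped to s, let τ(s, i) denote the i-th smallest index k' with g(k') = s (note τ(g(k), i) < k whenever 1 ≤ i ≤ n_k). Then Σ_{k=1}^K Σ_{i=1}^{n_k} α_{n_k}^i · φ(τ(g(k), i)) ≤ (1 + 1/H) · Σ_{k=1}^K φ(k). -/

import Mathlib

/-- Learning rate `α_t = (H+1)/(H+t)`. -/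
noncomputable def lr (H : ℕ) (t : ℕ) : ℝ := ((H : ℝ) + 1) / ((H : ℝ) + t)

/-- Weights `α_t^0 = ∏_{j=1}^t (1 - α_j)` and `α_t^i = α_i ∏_{j=i+1}^t (1 - α_j)` for `i ≥ 1`. -/
noncomputable def alphaW (H : ℕ) (t i : ℕ) : ℝ :=
  if i = 0 then ∏ j ∈ Finset.Icc 1 t, (1 - lr H j)
  else lr H i * ∏ j ∈ Finset.Icc (i + 1) t, (1 - lr H j)

open Finset

lemma lr_nonneg (H j : ℕ) : 0 ≤ lr H j := by unfold lr; positivity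

lemma one_sub_lr_nonneg (H : ℕ) {j : ℕ} (hj : 1 ≤ j) : 0 ≤ 1 - lr H j := by
  unfold lr
  rw [sub_nonneg]
  apply div_le_one_of_le₀
  · have : (1:ℝ) ≤ (j:ℝ) := by exact_mod_cast hj
    linarith
  · positivity

lemma alphaW_nonneg (H : ℕ) {t i : ℕ} (hi : 1 ≤ i) : 0 ≤ alphaW H t i := by
  unfold alphaW
  rw [if_neg (by omega)]
  apply mul_nonneg (lr_nonneg H i)
  apply Finset.prod_nonneg
  intro j hj
  exact one_sub_lr_nonneg H (by have := (mem_Icc.mp hj).1; omega)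

lemma alphaW_succ (H : ℕ) {i T : ℕ} (hi : 1 ≤ i) (hT : i ≤ T) :
    alphaW H (T + 1) i = alphaW H T i * (1 - lr H (T + 1)) := by
  unfold alphaW
  rw [if_neg (by omega), if_neg (by omega),
    Finset.prod_Icc_succ_top (by omega : i + 1 ≤ T + 1)]
  ring

lemma sum_alphaW_eq (H : ℕ) (hH : 1 ≤ H) {i : ℕ} (hi : 1 ≤ i) :
    ∀ T, i ≤ T → ∑ t ∈ Icc i T, alphaW H t i
      = 1 + 1 / (H : ℝ) - (T : ℝ) / (H : ℝ) * alphaW H T i := by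
  have hH0 : (0:ℝ) < (H:ℝ) := by exact_mod_cast hH
  refine Nat.le_induction ?_ ?_
  · have hIcc : Finset.Icc (i+1) i = ∅ := by
      apply Finset.Icc_eq_empty; omega
    have : alphaW H i i = ((H:ℝ) + 1) / ((H:ℝ) + i) := by
      unfold alphaW lr
      rw [if_neg (by omega), hIcc, Finset.prod_empty, mul_one]
    rw [Finset.Icc_self, Finset.sum_singleton, this]
    have hHi : (0:ℝ) < (H:ℝ) + i := by positivity
    field_simp
    ring
  · intro T hT ih
    rw [Finset.sum_Icc_succ_top (by omega : i ≤ T + 1), ih,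
      alphaW_succ H hi hT]
    have hden : (0:ℝ) < (H:ℝ) + (T+1:ℕ) := by positivity
    have hlr : 1 - lr H (T + 1) = (T : ℝ) / ((H:ℝ) + (T+1:ℕ)) := by
      unfold lr
      field_simp
      push_cast; ring
    rw [hlr]
    push_cast at hden ⊢
    field_simp
    ring

lemma sum_alphaW_le (H : ℕ) (hH : 1 ≤ H) {i : ℕ} (hi : 1 ≤ i) (N : ℕ) :
    ∑ t ∈ Ico i N, alphaW H t i ≤ 1 + 1 / (H : ℝ) := by
  have hH0 : (0:ℝ) < (H:ℝ) := by exact_mod_cast hH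
  rcases lt_or_ge (N - 1) i with h | h
  · have : Finset.Ico i N = ∅ := by apply Finset.Ico_eq_empty; omega
    rw [this, Finset.sum_empty]
    positivity
  · have hN : 1 ≤ N := by omega
    have : Finset.Ico i N = Finset.Icc i (N - 1) := by
      ext x; simp [mem_Ico, mem_Icc]; omega
    rw [this, sum_alphaW_eq H hH hi (N - 1) h]
    have h1 : 0 ≤ ((N-1:ℕ) : ℝ) / (H : ℝ) * alphaW H (N-1) i :=
      mul_nonneg (by positivity) (alphaW_nonneg H hi)
    linarith

/-- with `n_k = #{k' < k : g(k') = g(k)}` (counting only indices `k' ≥ 1`) and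
`τ(s,i)` the `i`-th smallest index `k'` with `1 ≤ k' ≤ K` and `g(k') = s`,
`∑_{k=1}^K ∑_{i=1}^{n_k} α_{n_k}^i φ(τ(g(k), i)) ≤ (1 + 1/H) ∑_{k=1}^K φ(k)`. -/
theorem swap_summation_bound (H : ℕ) (hH : 1 ≤ H) (K : ℕ) (hK : 1 ≤ K)
    (G : Type*) [Fintype G] [DecidableEq G] (g : ℕ → G) (φ : ℕ → ℝ)
    (hφ : ∀ k ∈ Finset.Icc 1 K, 0 ≤ φ k) :
    (∑ k ∈ Finset.Icc 1 K,
      ∑ i ∈ Finset.Icc 1 (((Finset.Ico 1 k).filter (fun k' => g k' = g k)).card),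
        alphaW H (((Finset.Ico 1 k).filter (fun k' => g k' = g k)).card) i *
          φ (Nat.nth (fun k' => 1 ≤ k' ∧ k' ≤ K ∧ g k' = g k) (i - 1))) ≤
      (1 + 1 / (H : ℝ)) * ∑ k ∈ Finset.Icc 1 K, φ k := by
  classical
  have hH0 : (0:ℝ) < (H:ℝ) := by exact_mod_cast hH
  set p : G → ℕ → Prop := fun s k' => 1 ≤ k' ∧ k' ≤ K ∧ g k' = s with hp
  have hfin : ∀ s, (setOf (p s)).Finite := by
    intro s
    apply (Set.finite_Iic K).subset
    intro x hx
    exact hx.2.1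
  set fiber : G → Finset ℕ := fun s => (Finset.Icc 1 K).filter (fun k => g k = s) with hfib
  have htf : ∀ s, (hfin s).toFinset = fiber s := by
    intro s
    ext x
    simp [hp, hfib, Set.Finite.mem_toFinset, mem_filter, mem_Icc, and_assoc, Set.mem_setOf_eq]
    exact Iff.rfl
  set N : G → ℕ := fun s => (fiber s).card with hN
  have hcard : ∀ s, #(hfin s).toFinset = N s := by intro s; rw [htf]
  -- inner count rewriting
  have hcount : ∀ s, ∀ k ∈ fiber s,
      ((Finset.Ico 1 k).filter (fun k' => g k' = g k)).card = Nat.count (p s) k := by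
    intro s k hk
    rw [mem_filter, mem_Icc] at hk
    obtain ⟨⟨hk1, hkK⟩, hgk⟩ := hk
    rw [Nat.count_eq_card_filter_range]
    congr 1
    ext x
    simp only [mem_filter, mem_Ico, mem_range, hp, hgk]
    constructor
    · rintro ⟨⟨h1, h2⟩, h3⟩
      exact ⟨h2, h1, by omega, h3⟩
    · rintro ⟨h1, h2, _, h4⟩
      exact ⟨⟨h2, h1⟩, h4⟩
  -- step 1: fiberwise grouping
  rw [← Finset.sum_fiberwise (Finset.Icc 1 K) g
      (fun k => ∑ i ∈ Finset.Icc 1 (((Finset.Ico 1 k).filter (fun k' => g k' = g k)).card),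
        alphaW H (((Finset.Ico 1 k).filter (fun k' => g k' = g k)).card) i *
          φ (Nat.nth (fun k' => 1 ≤ k' ∧ k' ≤ K ∧ g k' = g k) (i - 1)))]
  have key : ∀ s : G,
      (∑ k ∈ (Finset.Icc 1 K).filter (fun k => g k = s),
        ∑ i ∈ Finset.Icc 1 (((Finset.Ico 1 k).filter (fun k' => g k' = g k)).card),
          alphaW H (((Finset.Ico 1 k).filter (fun k' => g k' = g k)).card) i *
            φ (Nat.nth (fun k' => 1 ≤ k' ∧ k' ≤ K ∧ g k' = g k) (i - 1)))
      ≤ (1 + 1 / (H : ℝ)) * ∑ k ∈ fiber s, φ k := by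
    intro s
    have step1 :
        (∑ k ∈ (Finset.Icc 1 K).filter (fun k => g k = s),
          ∑ i ∈ Finset.Icc 1 (((Finset.Ico 1 k).filter (fun k' => g k' = g k)).card),
            alphaW H (((Finset.Ico 1 k).filter (fun k' => g k' = g k)).card) i *
              φ (Nat.nth (fun k' => 1 ≤ k' ∧ k' ≤ K ∧ g k' = g k) (i - 1)))
        = ∑ t ∈ Finset.range (N s), ∑ i ∈ Finset.Icc 1 t,
            alphaW H t i * φ (Nat.nth (p s) (i - 1)) := by
      refine Finset.sum_nbij' (fun k => Nat.count (p s) k) (fun t => Nat.nth (p s) t)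
        ?_ ?_ ?_ ?_ ?_
      · intro k hk
        have hpk : p s k := by
          rw [mem_filter, mem_Icc] at hk
          exact ⟨hk.1.1, hk.1.2, hk.2⟩
        rw [mem_range, ← hcard s]
        exact Nat.count_lt_card (hfin s) hpk
      · intro t ht
        rw [mem_range, ← hcard s] at ht
        have := Nat.nth_mem_of_lt_card (hfin s) ht
        rw [mem_filter, mem_Icc]
        exact ⟨⟨this.1, this.2.1⟩, this.2.2⟩
      · intro k hk
        have hpk : p s k := by
          rw [mem_filter, mem_Icc] at hk
          exact ⟨hk.1.1, hk.1.2, hk.2⟩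
        exact Nat.nth_count hpk
      · intro t ht
        rw [mem_range, ← hcard s] at ht
        exact Nat.count_nth_of_lt_card_finite (hfin s) ht
      · intro k hk
        have hgk : g k = s := (mem_filter.mp hk).2
        rw [hcount s k hk]
        simp only [hgk, hp]
    rw [step1]
    have step2 :
        ∑ t ∈ Finset.range (N s), ∑ i ∈ Finset.Icc 1 t,
            alphaW H t i * φ (Nat.nth (p s) (i - 1))
        = ∑ i ∈ Finset.Icc 1 (N s), ∑ t ∈ Finset.Ico i (N s),
            alphaW H t i * φ (Nat.nth (p s) (i - 1)) := by
      refine Finset.sum_comm' ?_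
      intro t i
      simp only [mem_range, mem_Icc, mem_Ico]
      omega
    rw [step2]
    have hφnth : ∀ i ∈ Finset.Icc 1 (N s), 0 ≤ φ (Nat.nth (p s) (i - 1)) := by
      intro i hi
      rw [mem_Icc] at hi
      have hlt : i - 1 < #(hfin s).toFinset := by rw [hcard]; omega
      have hmem := Nat.nth_mem_of_lt_card (hfin s) hlt
      exact hφ _ (mem_Icc.mpr ⟨hmem.1, hmem.2.1⟩)
    calc ∑ i ∈ Finset.Icc 1 (N s), ∑ t ∈ Finset.Ico i (N s),
            alphaW H t i * φ (Nat.nth (p s) (i - 1))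
        ≤ ∑ i ∈ Finset.Icc 1 (N s), (1 + 1 / (H : ℝ)) * φ (Nat.nth (p s) (i - 1)) := by
          apply Finset.sum_le_sum
          intro i hi
          rw [← Finset.sum_mul]
          exact mul_le_mul_of_nonneg_right
            (sum_alphaW_le H hH (mem_Icc.mp hi).1 (N s)) (hφnth i hi)
      _ = (1 + 1 / (H : ℝ)) * ∑ i ∈ Finset.Icc 1 (N s), φ (Nat.nth (p s) (i - 1)) := by
          rw [Finset.mul_sum]
      _ = (1 + 1 / (H : ℝ)) * ∑ k ∈ fiber s, φ k := by
          congr 1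
          have : ∑ i ∈ Finset.Icc 1 (N s), φ (Nat.nth (p s) (i - 1))
              = ∑ j ∈ Finset.range (N s), φ (Nat.nth (p s) j) := by
            refine Finset.sum_nbij' (fun i => i - 1) (fun j => j + 1) ?_ ?_ ?_ ?_ ?_
            · intro i hi; simp only [mem_Icc] at hi; simp only [mem_range]; omega
            · intro j hj; simp only [mem_range] at hj; simp only [mem_Icc]; omega
            · intro i hi; simp only [mem_Icc] at hi; omega
            · intro j hj; omega
            · intro i hi; rfl
          rw [this]
          refine Finset.sum_nbij' (fun j => Nat.nth (p s) j) (fun k => Nat.count (p s) k)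
            ?_ ?_ ?_ ?_ ?_
          · intro t ht
            rw [mem_range, ← hcard s] at ht
            have := Nat.nth_mem_of_lt_card (hfin s) ht
            rw [mem_filter, mem_Icc]
            exact ⟨⟨this.1, this.2.1⟩, this.2.2⟩
          · intro k hk
            have hpk : p s k := by
              rw [mem_filter, mem_Icc] at hk
              exact ⟨hk.1.1, hk.1.2, hk.2⟩
            rw [mem_range, ← hcard s]
            exact Nat.count_lt_card (hfin s) hpk
          · intro t ht
            rw [mem_range, ← hcard s] at ht
            exact Nat.count_nth_of_lt_card_finite (hfin s) ht
          · intro k hk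
            have hpk : p s k := by
              rw [mem_filter, mem_Icc] at hk
              exact ⟨hk.1.1, hk.1.2, hk.2⟩
            exact Nat.nth_count hpk
          · intro t ht; rfl
    done
  calc (∑ s : G, ∑ k ∈ (Finset.Icc 1 K).filter (fun k => g k = s),
        ∑ i ∈ Finset.Icc 1 (((Finset.Ico 1 k).filter (fun k' => g k' = g k)).card),
          alphaW H (((Finset.Ico 1 k).filter (fun k' => g k' = g k)).card) i *
            φ (Nat.nth (fun k' => 1 ≤ k' ∧ k' ≤ K ∧ g k' = g k) (i - 1)))
      ≤ ∑ s : G, (1 + 1 / (H : ℝ)) * ∑ k ∈ fiber s, φ k :=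
        Finset.sum_le_sum (fun s _ => key s)
    _ = (1 + 1 / (H : ℝ)) * ∑ k ∈ Finset.Icc 1 K, φ k := by
        rw [← Finset.mul_sum, Finset.sum_fiberwise]
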